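/- Let p be prime, 0, α, β distinct integers, R = ℤ_p[x]/(x(x−α)(x−β)), r₁, r₂, r₃ ≥ 0, and a₁, a₂, a₃ ∈ ℤ_p. The ℤ_p-submodule I of R spanned by g₁ = p^{r₁} + a₁x + a₂x(x−α), g₂ = p^{r₂}x + a₃x(x−α), g₃ = p^{r₃}x(x−α) is an ideal of R if and only if the following three conditions hold: (1) p^{r₂} + a₃(β−α) ∈ p^{r₃}ℤ_p; (2) p^{r₁} + αa₁ ∈ p^{r₂}ℤ_p; (3) (p^{r₂} − αa₃)a₁ + βp^{r₂}a₂ − p^{r₁}a₃ ∈ p^{r₂+r₃}ℤ_p. -/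

import Mathlib

/-- `ℤ_p`, the localization of `ℤ` at the prime `p`. -/
instance Zp.isPrime (p : ℕ) [Fact p.Prime] : (Ideal.span {(p : ℤ)}).IsPrime := by
  rw [Ideal.span_singleton_prime (by exact_mod_cast (Fact.out : p.Prime).ne_zero)]
  exact Nat.prime_iff_prime_int.mp Fact.out

abbrev Zp (p : ℕ) [Fact p.Prime] : Type := Localization.AtPrime (Ideal.span {(p : ℤ)})
open Polynomial

/-- The ring `R = ℤ_p[x]/(x(x−α)(x−β))`. -/
abbrev Rq (p : ℕ) [Fact p.Prime] (α β : ℤ) : Type :=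
  (Zp p)[X] ⧸ Ideal.span {X * (X - C ((α : ℤ) : Zp p)) * (X - C ((β : ℤ) : Zp p))}

theorem pZp_ne (p : ℕ) [Fact p.Prime] : (p : Zp p) ≠ 0 := by
  have h1 : Function.Injective (algebraMap ℤ (Zp p)) :=
    IsLocalization.injective (M := (Ideal.span {(p : ℤ)}).primeCompl) (Zp p)
      (Ideal.primeCompl_le_nonZeroDivisors _)
  intro h
  have h2 : algebraMap ℤ (Zp p) (p:ℤ) = algebraMap ℤ (Zp p) 0 := by
    simp only [map_natCast, map_zero]; exact h
  exact_mod_cast (Fact.out : p.Prime).ne_zero (by exact_mod_cast h1 h2)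

theorem mem_span_triple' {R M : Type*} [CommRing R] [AddCommGroup M] [Module R M]
    {a b c z : M} :
    z ∈ Submodule.span R {a, b, c} ↔ ∃ u t s : R, z = u • a + t • b + s • c := by
  constructor
  · intro h
    obtain ⟨u, w, hw, rfl⟩ := Submodule.mem_span_insert.mp h
    obtain ⟨t, w', hw', rfl⟩ := Submodule.mem_span_insert.mp hw
    obtain ⟨s, rfl⟩ := Submodule.mem_span_singleton.mp hw'
    exact ⟨u, t, s, by rw [add_assoc]⟩
  · rintro ⟨u, t, s, rfl⟩
    refine Submodule.add_mem _ (Submodule.add_mem _ ?_ ?_) ?_ <;>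
      exact Submodule.smul_mem _ _ (Submodule.subset_span (by simp))

/-- coordinates map -/
noncomputable def phi (p : ℕ) [Fact p.Prime] (α β : ℤ) (c₀ c₁ c₂ : Zp p) : Rq p α β :=
  Ideal.Quotient.mk _ (C c₀ + C c₁ * X + C c₂ * (X * (X - C ((α : ℤ) : Zp p))))

theorem phi_smul (p : ℕ) [Fact p.Prime] (α β : ℤ) (u c₀ c₁ c₂ : Zp p) :
    u • phi p α β c₀ c₁ c₂ = phi p α β (u*c₀) (u*c₁) (u*c₂) := by
  unfold phi
  rw [show ∀ q : (Zp p)[X], u • (Ideal.Quotient.mk (Ideal.span {X * (X - C ((α : ℤ) : Zp p)) * (X - C ((β : ℤ) : Zp p))}) q : Rq p α β) = Ideal.Quotient.mk _ (u • q) from fun q => rfl]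
  congr 1
  rw [Polynomial.smul_eq_C_mul, C_mul, C_mul, C_mul]; ring

theorem phi_add (p : ℕ) [Fact p.Prime] (α β : ℤ) (c₀ c₁ c₂ d₀ d₁ d₂ : Zp p) :
    phi p α β c₀ c₁ c₂ + phi p α β d₀ d₁ d₂ = phi p α β (c₀+d₀) (c₁+d₁) (c₂+d₂) := by
  unfold phi
  rw [← map_add]
  congr 1
  rw [C_add, C_add, C_add]; ring

theorem phi_eq_zero (p : ℕ) [Fact p.Prime] (α β : ℤ) {c₀ c₁ c₂ : Zp p}
    (h : phi p α β c₀ c₁ c₂ = 0) : c₀ = 0 ∧ c₁ = 0 ∧ c₂ = 0 := by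
  unfold phi at h
  rw [Ideal.Quotient.eq_zero_iff_mem, Ideal.mem_span_singleton] at h
  have hq : (C c₀ + C c₁ * X + C c₂ * (X * (X - C ((α : ℤ) : Zp p))) : (Zp p)[X]) = 0 := by
    refine Polynomial.eq_zero_of_dvd_of_degree_lt h ?_
    have hdeg3 : (X * (X - C ((α : ℤ) : Zp p)) * (X - C ((β : ℤ) : Zp p)) : (Zp p)[X]).degree
        = 3 := by
      rw [degree_mul, degree_mul, degree_X, degree_X_sub_C, degree_X_sub_C]; rfl
    rw [hdeg3]
    have h2 : (C c₀ + C c₁ * X + C c₂ * (X * (X - C ((α : ℤ) : Zp p))) : (Zp p)[X]).degree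
        ≤ 2 := by
      compute_degree
    exact lt_of_le_of_lt h2 (by decide)
  have hq2 : (C c₀ + C (c₁ - c₂ * ((α : ℤ) : Zp p)) * X + C c₂ * X^2 : (Zp p)[X]) = 0 := by
    rw [C_sub, C_mul]; rw [← hq]; ring
  have e2 : c₂ = 0 := by
    have := congrArg (fun q => Polynomial.coeff q 2) hq2
    simpa [coeff_add, coeff_C_mul, coeff_X_pow, coeff_C, coeff_X] using this
  have e1 : c₁ - c₂ * ((α : ℤ) : Zp p) = 0 := by
    have := congrArg (fun q => Polynomial.coeff q 1) hq2
    simpa [coeff_add, coeff_C_mul, coeff_X_pow, coeff_C, coeff_X] using this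
  have e0 : c₀ = 0 := by
    have := congrArg (fun q => Polynomial.coeff q 0) hq2
    simpa [coeff_add, coeff_C_mul, coeff_X_pow, coeff_C, coeff_X] using this
  refine ⟨e0, ?_, e2⟩
  rw [e2] at e1; simpa using e1

theorem phi_inj (p : ℕ) [Fact p.Prime] (α β : ℤ) {c₀ c₁ c₂ d₀ d₁ d₂ : Zp p}
    (h : phi p α β c₀ c₁ c₂ = phi p α β d₀ d₁ d₂) : c₀ = d₀ ∧ c₁ = d₁ ∧ c₂ = d₂ := by
  have h0 : phi p α β c₀ c₁ c₂ + phi p α β (-d₀) (-d₁) (-d₂) = 0 := by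
    rw [h, phi_add]
    simp only [add_neg_cancel]
    unfold phi; simp
  rw [phi_add] at h0
  obtain ⟨e0, e1, e2⟩ := phi_eq_zero p α β h0
  refine ⟨?_, ?_, ?_⟩ <;>
    [skip; skip; skip] <;> first
      | (rwa [← sub_eq_add_neg, sub_eq_zero] at e0)
      | (rwa [← sub_eq_add_neg, sub_eq_zero] at e1)
      | (rwa [← sub_eq_add_neg, sub_eq_zero] at e2)

theorem xq_mul_phi (p : ℕ) [Fact p.Prime] (α β : ℤ) (c₀ c₁ c₂ : Zp p) :
    Ideal.Quotient.mk _ X * phi p α β c₀ c₁ c₂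
      = phi p α β 0 (c₀ + ((α : ℤ) : Zp p)*c₁) (c₁ + ((β : ℤ) : Zp p)*c₂) := by
  unfold phi
  rw [← map_mul, Ideal.Quotient.eq]
  refine Ideal.mem_span_singleton.mpr ⟨C c₂, ?_⟩
  rw [C_add, C_mul, C_add, C_mul, C_0]
  ring

set_option maxHeartbeats 1000000
set_option synthInstance.maxHeartbeats 400000

/-- In `R = ℤ_p[x]/(x(x−α)(x−β))` with `0, α, β` distinct integers, the
`ℤ_p`-submodule spanned by `g₁ = p^{r₁} + a₁x + a₂x(x−α)`, `g₂ = p^{r₂}x + a₃x(x−α)`,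
`g₃ = p^{r₃}x(x−α)` is an ideal of `R` (i.e. is closed under multiplication by `R`) iff
(1) `p^{r₂} + a₃(β−α) ∈ p^{r₃}ℤ_p`, (2) `p^{r₁} + αa₁ ∈ p^{r₂}ℤ_p`, and
(3) `(p^{r₂} − αa₃)a₁ + βp^{r₂}a₂ − p^{r₁}a₃ ∈ p^{r₂+r₃}ℤ_p`. -/
theorem stmt16 (p : ℕ) [Fact p.Prime] (α β : ℤ)
    (hα : α ≠ 0) (hβ : β ≠ 0) (hαβ : α ≠ β)
    (r₁ r₂ r₃ : ℕ) (a₁ a₂ a₃ : Zp p)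
    (xq y g₁ g₂ g₃ : Rq p α β) (hx : xq = Ideal.Quotient.mk _ X)
    (hy : y = xq * (xq - (algebraMap (Zp p) (Rq p α β) : Zp p →+* Rq p α β) ((α : ℤ) : Zp p)))
    (hg₁ : g₁ = ((p : Rq p α β)) ^ r₁
      + (algebraMap (Zp p) (Rq p α β) : Zp p →+* Rq p α β) a₁ * xq + (algebraMap (Zp p) (Rq p α β) : Zp p →+* Rq p α β) a₂ * y)
    (hg₂ : g₂ = ((p : Rq p α β)) ^ r₂ * xq + (algebraMap (Zp p) (Rq p α β) : Zp p →+* Rq p α β) a₃ * y)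
    (hg₃ : g₃ = ((p : Rq p α β)) ^ r₃ * y) :
    (∀ r : Rq p α β, ∀ z ∈ Submodule.span (Zp p) {g₁, g₂, g₃},
        r * z ∈ Submodule.span (Zp p) {g₁, g₂, g₃}) ↔
      ((p : Zp p) ^ r₂ + a₃ * ((β - α : ℤ) : Zp p) ∈ Ideal.span {(p : Zp p) ^ r₃} ∧
       (p : Zp p) ^ r₁ + ((α : ℤ) : Zp p) * a₁ ∈ Ideal.span {(p : Zp p) ^ r₂} ∧
       ((p : Zp p) ^ r₂ - ((α : ℤ) : Zp p) * a₃) * a₁ + ((β : ℤ) : Zp p) * (p : Zp p) ^ r₂ * a₂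
           - (p : Zp p) ^ r₁ * a₃ ∈ Ideal.span {(p : Zp p) ^ (r₂ + r₃)}) := by
  have hpA : (p : Zp p) ≠ 0 := pZp_ne p
  have hP1 : (p : Zp p)^r₁ ≠ 0 := pow_ne_zero _ hpA
  have hP2 : (p : Zp p)^r₂ ≠ 0 := pow_ne_zero _ hpA
  have halg : ∀ a : Zp p, algebraMap (Zp p) (Rq p α β) a
      = Ideal.Quotient.mk _ (C a) := fun a => by
      rw [← Ideal.Quotient.mk_algebraMap, Polynomial.algebraMap_eq]
  have hsmul : ∀ (a : Zp p) (w : Rq p α β), a • w = (algebraMap (Zp p) (Rq p α β) : Zp p →+* Rq p α β) a * w := by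
    intro a w
    obtain ⟨v, rfl⟩ := Ideal.Quotient.mk_surjective w
    rw [halg, ← map_mul, ← smul_eq_C_mul]; rfl
  have hp' : (p : Rq p α β) = (algebraMap (Zp p) (Rq p α β) : Zp p →+* Rq p α β) (p : Zp p) := by
    rw [map_natCast]
  have hy' : y = Ideal.Quotient.mk _ (X * (X - C ((α : ℤ) : Zp p))) := by
    rw [hy, hx, halg, ← map_sub, ← map_mul]
  have hxphi : ∀ c₀ c₁ c₂ : Zp p, xq * phi p α β c₀ c₁ c₂
      = phi p α β 0 (c₀ + ((α : ℤ) : Zp p)*c₁) (c₁ + ((β : ℤ) : Zp p)*c₂) := by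
    intro c₀ c₁ c₂; rw [hx]; exact xq_mul_phi p α β c₀ c₁ c₂
  have hg₁' : g₁ = phi p α β ((p:Zp p)^r₁) a₁ a₂ := by
    rw [hg₁, hp', ← map_pow, hy', hx, halg, halg, halg]
    unfold phi
    simp only [map_add, map_mul]
  have hg₂' : g₂ = phi p α β 0 ((p:Zp p)^r₂) a₃ := by
    rw [hg₂, hp', ← map_pow, hy', hx, halg, halg]
    unfold phi
    rw [C_0, zero_add]
    simp only [map_add, map_mul]
  have hg₃' : g₃ = phi p α β 0 0 ((p:Zp p)^r₃) := by
    rw [hg₃, hp', ← map_pow, hy', halg]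
    unfold phi
    rw [C_0, zero_mul, zero_add, zero_add]
    simp only [map_mul]
  have hcombo : ∀ u t s : Zp p, u • g₁ + t • g₂ + s • g₃
      = phi p α β (u*(p:Zp p)^r₁) (u*a₁ + t*(p:Zp p)^r₂) (u*a₂ + t*a₃ + s*(p:Zp p)^r₃) := by
    intro u t s
    rw [hg₁', hg₂', hg₃', phi_smul, phi_smul, phi_smul, phi_add, phi_add]
    simp only [mul_zero, add_zero, zero_add]
  have hcombo0 : ∀ t s : Zp p, t • g₂ + s • g₃
      = phi p α β 0 (t*(p:Zp p)^r₂) (t*a₃ + s*(p:Zp p)^r₃) := by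
    intro t s
    rw [hg₂', hg₃', phi_smul, phi_smul, phi_add]
    simp only [mul_zero, add_zero, zero_add]
  have memM_iff : ∀ c₀ c₁ c₂ : Zp p,
      phi p α β c₀ c₁ c₂ ∈ Submodule.span (Zp p) {g₁, g₂, g₃}
        ↔ ∃ u t s : Zp p, c₀ = u*(p:Zp p)^r₁ ∧ c₁ = u*a₁ + t*(p:Zp p)^r₂
            ∧ c₂ = u*a₂ + t*a₃ + s*(p:Zp p)^r₃ := by
    intro c₀ c₁ c₂
    rw [mem_span_triple']
    constructor
    · rintro ⟨u, t, s, h⟩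
      rw [hcombo] at h
      obtain ⟨e0, e1, e2⟩ := phi_inj p α β h
      exact ⟨u, t, s, e0, e1, e2⟩
    · rintro ⟨u, t, s, e0, e1, e2⟩
      exact ⟨u, t, s, by rw [hcombo, ← e0, ← e1, ← e2]⟩
  constructor
  · intro hI
    have m2 : phi p α β 0 (0 + ((α:ℤ):Zp p)*(p:Zp p)^r₂)
        ((p:Zp p)^r₂ + ((β:ℤ):Zp p)*a₃) ∈ Submodule.span (Zp p) {g₁, g₂, g₃} := by
      rw [← hxphi, ← hg₂']
      exact hI xq g₂ (Submodule.subset_span (by simp))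
    rw [memM_iff] at m2
    obtain ⟨u, t, s, e0, e1, e2⟩ := m2
    have hu : u = 0 := by
      rcases mul_eq_zero.mp e0.symm with h | h
      · exact h
      · exact absurd h hP1
    subst hu
    have m1 : phi p α β 0 ((p:Zp p)^r₁ + ((α:ℤ):Zp p)*a₁)
        (a₁ + ((β:ℤ):Zp p)*a₂) ∈ Submodule.span (Zp p) {g₁, g₂, g₃} := by
      rw [← hxphi, ← hg₁']
      exact hI xq g₁ (Submodule.subset_span (by simp))
    rw [memM_iff] at m1
    obtain ⟨u', t', s', f0, f1, f2⟩ := m1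
    have hu' : u' = 0 := by
      rcases mul_eq_zero.mp f0.symm with h | h
      · exact h
      · exact absurd h hP1
    subst hu'
    have ht : ((α:ℤ):Zp p) = t := mul_right_cancel₀ hP2 (by linear_combination e1)
    refine ⟨?_, ?_, ?_⟩
    · refine Ideal.mem_span_singleton.mpr ⟨s, ?_⟩
      push_cast
      linear_combination e2 - a₃ * ht
    · exact Ideal.mem_span_singleton.mpr ⟨t', by linear_combination f1⟩
    · refine Ideal.mem_span_singleton.mpr ⟨s', ?_⟩
      rw [pow_add]
      linear_combination ((p:Zp p)^r₂) * f2 - a₃ * f1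
  · rintro ⟨h1, h2, h3⟩
    obtain ⟨s₁, hs₁⟩ := Ideal.mem_span_singleton.mp h1
    obtain ⟨t₂, ht₂⟩ := Ideal.mem_span_singleton.mp h2
    obtain ⟨s₃, hs₃⟩ := Ideal.mem_span_singleton.mp h3
    rw [pow_add] at hs₃
    push_cast at hs₁
    have c1 : (p:Zp p)^r₁ + ((α:ℤ):Zp p)*a₁ = t₂*(p:Zp p)^r₂ := by linear_combination ht₂
    have c2 : a₁ + ((β:ℤ):Zp p)*a₂ = t₂*a₃ + s₃*(p:Zp p)^r₃ := by
      apply mul_left_cancel₀ hP2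
      linear_combination hs₃ + a₃ * ht₂
    have c3 : (p:Zp p)^r₂ + ((β:ℤ):Zp p)*a₃ = ((α:ℤ):Zp p)*a₃ + s₁*(p:Zp p)^r₃ := by
      linear_combination hs₁
    have hx1 : xq * g₁ = t₂ • g₂ + s₃ • g₃ := by
      rw [hg₁', hxphi, hcombo0, c1, c2]
    have hx2 : xq * g₂ = ((α:ℤ):Zp p) • g₂ + s₁ • g₃ := by
      rw [hcombo0, hg₂', hxphi, zero_add, c3]
    have hx3 : xq * g₃ = ((β:ℤ):Zp p) • g₃ := by
      rw [hg₃', hxphi, phi_smul]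
      simp only [mul_zero, add_zero, zero_add]
    have hxM : ∀ w ∈ Submodule.span (Zp p) {g₁, g₂, g₃},
        xq * w ∈ Submodule.span (Zp p) {g₁, g₂, g₃} := by
      intro w hw
      induction hw using Submodule.span_induction with
      | mem z hz =>
        simp only [Set.mem_insert_iff, Set.mem_singleton_iff] at hz
        rcases hz with rfl | rfl | rfl
        · rw [hx1]
          exact Submodule.add_mem _
            (Submodule.smul_mem _ _ (Submodule.subset_span (by simp)))
            (Submodule.smul_mem _ _ (Submodule.subset_span (by simp)))
        · rw [hx2]
          exact Submodule.add_mem _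
            (Submodule.smul_mem _ _ (Submodule.subset_span (by simp)))
            (Submodule.smul_mem _ _ (Submodule.subset_span (by simp)))
        · rw [hx3]
          exact Submodule.smul_mem _ _ (Submodule.subset_span (by simp))
      | zero =>
        convert Submodule.zero_mem (Submodule.span (Zp p) {g₁, g₂, g₃}) using 1
        exact mul_zero xq
      | add x y hxm hym ihx ihy => rw [mul_add]; exact Submodule.add_mem _ ihx ihy
      | smul a x hxm ih => rw [mul_smul_comm]; exact Submodule.smul_mem _ _ ih
    rw [hx] at hxM
    have key : ∀ q : (Zp p)[X], ∀ w ∈ Submodule.span (Zp p) {g₁, g₂, g₃},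
        (Ideal.Quotient.mk _ q : Rq p α β) * w ∈ Submodule.span (Zp p) {g₁, g₂, g₃} := by
      intro q
      induction q using Polynomial.induction_on with
      | C a =>
        intro w hw
        rw [← halg, ← hsmul]
        exact Submodule.smul_mem _ _ hw
      | add q r ihq ihr =>
        intro w hw
        rw [map_add, add_mul]
        exact Submodule.add_mem _ (ihq w hw) (ihr w hw)
      | monomial n a ih =>
        intro w hw
        rw [show (C a * X^(n+1) : (Zp p)[X]) = X * (C a * X^n) from by ring, map_mul]
        have heq := mul_assoc
          (Ideal.Quotient.mk (Ideal.span {X * (X - C ((α : ℤ) : Zp p)) * (X - C ((β : ℤ) : Zp p))}) X)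
          (Ideal.Quotient.mk (Ideal.span {X * (X - C ((α : ℤ) : Zp p)) * (X - C ((β : ℤ) : Zp p))}) (C a * X ^ n)) w
        rw [heq]
        exact hxM _ (ih w hw)
    intro r w hw
    obtain ⟨q, rfl⟩ := Ideal.Quotient.mk_surjective r
    exact key q w hw
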